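/- Let n ≥ 2 and let J be a nonempty poset ideal in Hom(P,[n]). If P is not an antichain (i.e., there exist q < q' in P), then there exists a face G of Δ(J) of cardinality |P|·(n−1) − 1 that is contained in exactly one facet of Δ(J). -/
import Mathlib


variable {P : Type*} [PartialOrder P] [Fintype P] [DecidableEq P]

/-- The graph `Γφ = {(p, φ p) | p ∈ P}` of a map φ : P → [n], as a finite set. -/
def GammaF {n : ℕ} (φ : P → Fin n) : Finset (P × Fin n) :=
  Finset.univ.image fun p => (p, φ p)

/-- F is a face of Δ(J) iff F misses the graph Γφ of some φ ∈ J. -/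
def IsFace {n : ℕ} (J : Set (P → Fin n)) (F : Finset (P × Fin n)) : Prop :=
  ∃ φ ∈ J, ∀ p : P, (p, φ p) ∉ F

/-- A facet of Δ(J) is a face maximal under inclusion. -/
def IsFacet {n : ℕ} (J : Set (P → Fin n)) (F : Finset (P × Fin n)) : Prop :=
  IsFace J F ∧ ∀ G : Finset (P × Fin n), IsFace J G → F ⊆ G → F = G

lemma mem_GammaF {n : ℕ} (φ : P → Fin n) (a : P) (b : Fin n) :
    (a, b) ∈ GammaF φ ↔ φ a = b := by
  simp [GammaF, Prod.ext_iff]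

lemma compl_facet {n : ℕ} (J : Set (P → Fin n)) (ψ : P → Fin n) (hψ : ψ ∈ J) :
    IsFacet J (Finset.univ \ GammaF ψ) := by
  constructor
  · exact ⟨ψ, hψ, fun p hp => (Finset.mem_sdiff.mp hp).2 ((mem_GammaF ψ p (ψ p)).mpr rfl)⟩
  · rintro G ⟨ψ', hψ', hG⟩ hsub
    have hpsi : ψ' = ψ := by
      funext p
      have h1 : (p, ψ' p) ∈ GammaF ψ := by
        by_contra h
        exact hG p (hsub (Finset.mem_sdiff.mpr ⟨Finset.mem_univ _, h⟩))
      exact ((mem_GammaF ψ p (ψ' p)).mp h1).symm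
    subst hpsi
    apply Finset.Subset.antisymm hsub
    intro x hx
    rw [Finset.mem_sdiff]
    refine ⟨Finset.mem_univ _, fun hmem => ?_⟩
    obtain ⟨a, b⟩ := x
    have := (mem_GammaF ψ' a b).mp hmem
    subst this
    exact hG a hx

/-- Let n ≥ 2 and J a nonempty poset ideal in Hom(P,[n]).  If P is not an antichain, then
some face G of Δ(J) of cardinality |P|·(n−1) − 1 is contained in exactly one facet of Δ(J). -/
theorem stmt15 [Nonempty P] {n : ℕ} (hn : 2 ≤ n) (J : Set (P → Fin n))
    (hJ1 : ∀ φ ∈ J, Monotone φ)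
    (hJ2 : ∀ φ ∈ J, ∀ ψ : P → Fin n, Monotone ψ → ψ ≤ φ → ψ ∈ J)
    (hJne : J.Nonempty)
    (hP : ∃ q q' : P, q < q') :
    ∃ G : Finset (P × Fin n), IsFace J G ∧ G.card = Fintype.card P * (n - 1) - 1 ∧
      ∃! F : Finset (P × Fin n), IsFacet J F ∧ G ⊆ F := by
  obtain ⟨q, q', hqq⟩ := hP
  set z : Fin n := ⟨0, by omega⟩ with hz
  set i : Fin n := ⟨1, by omega⟩ with hi
  set φ : P → Fin n := fun _ => z with hφ
  have hφJ : φ ∈ J := by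
    obtain ⟨φ₀, hφ₀⟩ := hJne
    exact hJ2 φ₀ hφ₀ φ monotone_const (fun p => by simp [hφ, hz, Fin.le_def])
  set C : Finset (P × Fin n) := Finset.univ \ GammaF φ with hC
  set G : Finset (P × Fin n) := C.erase (q, i) with hG
  -- key: any ψ ∈ J whose graph misses G equals φ
  have key : ∀ ψ ∈ J, (∀ p : P, (p, ψ p) ∉ G) → ψ = φ := by
    intro ψ hψ hmiss
    have hval : ∀ p : P, ψ p = z ∨ ((p, ψ p) = (q, i)) := by
      intro p
      have := hmiss p
      rw [hG, Finset.mem_erase] at this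
      push_neg at this
      by_cases hc : (p, ψ p) = (q, i)
      · exact Or.inr hc
      · have h2 := this hc
        rw [hC, Finset.mem_sdiff] at h2
        push_neg at h2
        have h3 := h2 (Finset.mem_univ _)
        left
        exact ((mem_GammaF φ p (ψ p)).mp h3).symm
    funext p
    rcases hval p with h | h
    · exact h
    · exfalso
      have hpq : p = q := congrArg Prod.fst h
      have hψp : ψ q = i := by rw [← hpq]; exact congrArg Prod.snd h
      have hq' : ψ q' = z := by
        rcases hval q' with h' | h'
        · exact h'
        · exfalso
          have hq'q : q' = q := congrArg Prod.fst h'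
          exact absurd hq'q.symm (ne_of_lt hqq)
      have hmono := hJ1 ψ hψ hqq.le
      rw [hψp, hq'] at hmono
      simp [hi, hz, Fin.le_def] at hmono
    -- done key
  have hGC : (q, i) ∈ C := by
    rw [hC, Finset.mem_sdiff]
    refine ⟨Finset.mem_univ _, fun h => ?_⟩
    have := (mem_GammaF φ q i).mp h
    simp [hφ, hz, hi, Fin.ext_iff] at this
  have hGsub : G ⊆ C := Finset.erase_subset _ _
  refine ⟨G, ?_, ?_, ?_⟩
  · exact ⟨φ, hφJ, fun p hp => by
      have := hGsub hp
      rw [hC, Finset.mem_sdiff] at this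
      exact this.2 ((mem_GammaF φ p (φ p)).mpr rfl)⟩
  · have hcardΓ : (GammaF φ).card = Fintype.card P := by
      rw [GammaF, Finset.card_image_of_injective _ (fun a b h => congrArg Prod.fst h)]
      simp
    have hΓsub : GammaF φ ⊆ Finset.univ := Finset.subset_univ _
    have hcardC : C.card = Fintype.card P * (n - 1) := by
      rw [hC, Finset.card_sdiff_of_subset hΓsub, hcardΓ, Finset.card_univ, Fintype.card_prod,
        Fintype.card_fin]
      obtain ⟨m, rfl⟩ : ∃ m, n = m + 2 := ⟨n - 2, by omega⟩
      simp [Nat.mul_succ, Nat.mul_add]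
    rw [hG, Finset.card_erase_of_mem hGC, hcardC]
  · refine ⟨C, ⟨compl_facet J φ hφJ, hGsub⟩, ?_⟩
    rintro F ⟨⟨⟨ψ, hψ, hF⟩, hmax⟩, hGF⟩
    have hψφ : ψ = φ := key ψ hψ (fun p hp => hF p (hGF hp))
    rw [hψφ] at hF
    exact hmax C ⟨φ, hφJ, fun p hp => (Finset.mem_sdiff.mp hp).2
      ((mem_GammaF φ p (φ p)).mpr rfl)⟩
      (fun x hx => Finset.mem_sdiff.mpr ⟨Finset.mem_univ _, fun hm => by
        obtain ⟨a, b⟩ := x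
        have hb := (mem_GammaF φ a b).mp hm
        subst hb
        exact hF a hx⟩)
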